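/- Let n ≥ 2 be an integer and let (ξ_i)_{i≥1} be i.i.d. random variables with the Binomial(n, 1/n) distribution. Set S_0 = 1 and S_t = 1 + Σ_{i=1}^{t}(ξ_i − 1), fix an integer H with 2 ≤ H ≤ n − 3, let γ = min{t ≥ 1 : S_t ≥ H or S_t = 0}, and let γ* = min(γ, H²). Then for every c ∈ (0,1), E[e^{c·S_{γ*}} | S_{γ*} > 0] ≤ exp(c·H + c + c²). -/

import Mathlib

open MeasureTheory ProbabilityTheory Finset
open scoped ENNReal

/-- The Binomial(n,p) distribution, as a measure on `ℕ`. -/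
noncomputable def binomialMeasure (n : ℕ) (p : ℝ) : Measure ℕ :=
  Measure.sum fun k : ℕ =>
    (ENNReal.ofReal ((n.choose k : ℝ) * p ^ k * (1 - p) ^ (n - k))) • Measure.dirac k

/-- The random walk `S_t = 1 + ∑_{i=1}^t (ξ_i - 1)`. -/
def walk {Ω : Type*} (ξ : ℕ → Ω → ℕ) (t : ℕ) (ω : Ω) : ℤ :=
  1 + ∑ i ∈ Finset.Icc 1 t, ((ξ i ω : ℤ) - 1)

/-- The stopping time `γ = min {t ≥ 1 : S_t ≥ H or S_t = 0}`. -/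
noncomputable def hitTime {Ω : Type*} (ξ : ℕ → Ω → ℕ) (H : ℕ) (ω : Ω) : ℕ :=
  sInf {t | 1 ≤ t ∧ ((H : ℤ) ≤ walk ξ t ω ∨ walk ξ t ω = 0)}

namespace NPaux

noncomputable def q (n k : ℕ) : ℝ := (n.choose k : ℝ) * (1/n)^k * (1 - 1/n)^(n-k)

lemma q_nonneg {n : ℕ} (hn : 2 ≤ n) (k : ℕ) : 0 ≤ q n k := by
  have h1 : (0:ℝ) ≤ 1/n := by positivity
  have h2 : (0:ℝ) ≤ 1 - 1/n := by
    have : (1:ℝ)/n ≤ 1 := by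
      rw [div_le_one (by exact_mod_cast Nat.lt_of_lt_of_le two_pos hn)]
      exact_mod_cast Nat.one_le_of_lt (Nat.lt_of_lt_of_le one_lt_two hn)
    linarith
  unfold q; positivity

lemma q_pos {n k : ℕ} (hn : 2 ≤ n) (hk : k ≤ n) : 0 < q n k := by
  have hn0 : (0:ℝ) < n := by exact_mod_cast Nat.lt_of_lt_of_le two_pos hn
  have h1 : (0:ℝ) < 1/n := by positivity
  have h2 : (0:ℝ) < 1 - 1/n := by
    rw [sub_pos, div_lt_one hn0]
    exact_mod_cast Nat.lt_of_lt_of_le one_lt_two hn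
  have h3 : (0:ℝ) < n.choose k := by exact_mod_cast Nat.choose_pos hk
  unfold q; positivity

lemma q_zero_of_gt {n k : ℕ} (hk : n < k) : q n k = 0 := by
  unfold q; rw [Nat.choose_eq_zero_of_lt hk]; simp

lemma q_succ_mul {n k : ℕ} (hn : 2 ≤ n) (hk : 1 ≤ k) :
    ((k:ℝ)+1) * q n (k+1) ≤ q n k := by
  rcases le_or_gt k n with h | h
  · rcases eq_or_lt_of_le h with rfl | hlt
    · rw [q_zero_of_gt (Nat.lt_succ_self k)]
      simpa using q_nonneg hn k
    -- k < n
    have hn0 : (0:ℝ) < n := by exact_mod_cast Nat.lt_of_lt_of_le two_pos hn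
    have hchoose : (n.choose (k+1) : ℝ) * (k+1) = (n.choose k : ℝ) * (n - k) := by
      have := Nat.choose_succ_right_eq n k
      have h2 : ((n.choose (k+1) * (k+1) : ℕ) : ℝ) = ((n.choose k * (n - k) : ℕ) : ℝ) := by
        exact_mod_cast congrArg (Nat.cast (R := ℝ)) this
      push_cast [Nat.cast_sub (le_of_lt hlt)] at h2
      exact_mod_cast h2
    have hsub : n - (k+1) + 1 = n - k := by omega
    have hq1 : q n (k+1) = (n.choose (k+1) : ℝ) * (1/n)^k * (1/n) * (1 - 1/n)^(n-(k+1)) := by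
      unfold q; rw [pow_succ]; ring
    have hq0 : q n k = (n.choose k : ℝ) * (1/n)^k * ((1 - 1/n)^(n-(k+1)) * (1 - 1/n)) := by
      unfold q
      rw [← pow_succ, hsub]
    rw [hq1, hq0]
    have hnk : ((n:ℝ) - k) / n ≤ 1 - 1/n := by
      have he : (1 - 1/(n:ℝ)) * n = n - 1 := by field_simp
      rw [div_le_iff₀ hn0, he]
      have : (1:ℝ) ≤ k := by exact_mod_cast hk
      linarith
    have hpow : (0:ℝ) ≤ (1/n)^k := by positivity
    have hpow2 : (0:ℝ) ≤ (1 - 1/n)^(n-(k+1)) := by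
      have : (1:ℝ)/n ≤ 1 := by
        rw [div_le_one hn0]; exact_mod_cast Nat.one_le_of_lt (Nat.lt_of_lt_of_le one_lt_two hn)
      exact pow_nonneg (by linarith) _
    have key : ((k:ℝ)+1) * ((n.choose (k+1) : ℝ) * (1/n)) ≤ (n.choose k : ℝ) * (1 - 1/n) := by
      have h1 : ((k:ℝ)+1) * ((n.choose (k+1) : ℝ) * (1/n)) = (n.choose k : ℝ) * (((n:ℝ) - k)/n) := by
        field_simp
        linarith [hchoose]
      rw [h1]
      have : (0:ℝ) ≤ (n.choose k : ℝ) := by positivity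
      calc (n.choose k : ℝ) * (((n:ℝ) - k)/n) ≤ (n.choose k : ℝ) * (1 - 1/n) :=
        mul_le_mul_of_nonneg_left hnk this
      _ = _ := rfl
    calc ((k:ℝ)+1) * ((n.choose (k+1) : ℝ) * (1/n)^k * (1/n) * (1 - 1/n)^(n-(k+1)))
        = (((k:ℝ)+1) * ((n.choose (k+1) : ℝ) * (1/n))) * ((1/n)^k * (1 - 1/n)^(n-(k+1))) := by ring
      _ ≤ ((n.choose k : ℝ) * (1 - 1/n)) * ((1/n)^k * (1 - 1/n)^(n-(k+1))) := by
          apply mul_le_mul_of_nonneg_right key (by positivity)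
      _ = (n.choose k : ℝ) * (1/n)^k * ((1 - 1/n)^(n-(k+1)) * (1 - 1/n)) := by ring
  · rw [q_zero_of_gt (by omega)]
    simpa using q_nonneg hn k

lemma q_succ_le {n k : ℕ} (hn : 2 ≤ n) (hk : 1 ≤ k) : q n (k+1) ≤ q n k / ((k:ℝ)+1) := by
  rw [le_div_iff₀ (by positivity)]
  calc q n (k+1) * ((k:ℝ)+1) = ((k:ℝ)+1) * q n (k+1) := by ring
    _ ≤ q n k := q_succ_mul hn hk

lemma q_tail {n a : ℕ} (hn : 2 ≤ n) (ha : 2 ≤ a) (m : ℕ) :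
    q n (a+1+m) ≤ q n (a+1) / 4^m := by
  induction m with
  | zero => simp
  | succ m ih =>
    have h1 : q n (a+1+m+1) ≤ q n (a+1+m) / ((a+1+m:ℝ)+1) := by
      exact_mod_cast q_succ_le hn (by omega)
    have h2 : q n (a+1+m) / ((a+1+m:ℝ)+1) ≤ q n (a+1+m) / 4 := by
      apply div_le_div_of_nonneg_left (q_nonneg hn _) (by norm_num)
      have : (2:ℝ) ≤ a := by exact_mod_cast ha
      linarith
    have h3 : q n (a+1+m) / 4 ≤ (q n (a+1) / 4^m) / 4 := by gcongr
    calc q n (a+1+m+1) ≤ q n (a+1+m) / ((a+1+m:ℝ)+1) := h1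
      _ ≤ q n (a+1+m) / 4 := h2
      _ ≤ (q n (a+1) / 4^m) / 4 := h3
      _ = q n (a+1) / 4^(m+1) := by rw [pow_succ]; ring

lemma geom_aux {x : ℝ} (hx1 : 1 ≤ x) (hx3 : x ≤ 3) (K : ℕ) :
    ∑ i ∈ Finset.range K, (x^(i+1) - 1)/4^(i+1) ≤ 4*(x-1)/(3*(4-x)) := by
  have h4x : (0:ℝ) < 4 - x := by linarith
  have hu1 : x/4 - 1 ≠ 0 := by intro h; nlinarith
  have hB0 : (0:ℝ) ≤ (1/4:ℝ)^K := by positivity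
  have hBA : (1/4:ℝ)^K ≤ (x/4)^K := by
    apply pow_le_pow_left₀ (by norm_num) (by linarith)
  have hA1 : (x/4)^K ≤ 1 := by
    apply pow_le_one₀ (by linarith) (by linarith)
  have hterm : ∀ i : ℕ, (x^(i+1) - 1)/4^(i+1) = (x/4)^(i+1) - (1/4:ℝ)^(i+1) := by
    intro i
    rw [div_pow, div_pow, sub_div]
    norm_num
  rw [Finset.sum_congr rfl (fun i _ => hterm i), Finset.sum_sub_distrib]
  have s1 : ∑ i ∈ Finset.range K, (x/4)^(i+1) = x*(1-(x/4)^K)/(4-x) := by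
    have h : ∀ i : ℕ, (x/4)^(i+1) = (x/4) * (x/4)^i := fun i => by rw [pow_succ]; ring
    rw [Finset.sum_congr rfl (fun i _ => h i), ← Finset.mul_sum,
      geom_sum_eq (by intro h'; exact hu1 (by rw [h']; ring)) K]
    rw [← mul_div_assoc, div_eq_div_iff hu1 (by linarith : (4:ℝ) - x ≠ 0)]
    ring
  have s2 : ∑ i ∈ Finset.range K, (1/4:ℝ)^(i+1) = (1-(1/4:ℝ)^K)/3 := by
    have h : ∀ i : ℕ, (1/4:ℝ)^(i+1) = (1/4) * (1/4:ℝ)^i := fun i => by rw [pow_succ]; ring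
    rw [Finset.sum_congr rfl (fun i _ => h i), ← Finset.mul_sum,
      geom_sum_eq (by norm_num) K]
    rw [← mul_div_assoc, div_eq_div_iff (by norm_num : (1/4:ℝ) - 1 ≠ 0) (by norm_num : (3:ℝ) ≠ 0)]
    ring
  rw [s1, s2]
  have hnum : 0 ≤ 3*x*(x/4)^K + x*(1/4:ℝ)^K - 4*(1/4:ℝ)^K := by nlinarith
  rw [sub_le_iff_le_add, div_add_div _ _ (by positivity : (3*(4-x):ℝ) ≠ 0) (by norm_num : (3:ℝ) ≠ 0),
    div_le_div_iff₀ h4x (by positivity)]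
  nlinarith [mul_nonneg (le_of_lt h4x) hnum]

set_option maxHeartbeats 1000000 in
lemma key {n : ℕ} (hn : 2 ≤ n) {a : ℕ} (ha : 2 ≤ a) {c : ℝ} (hc0 : 0 < c) (hc1 : c < 1) :
    ∑ k ∈ Finset.Icc a n, Real.exp (c*k) * q n k
      ≤ Real.exp (c*((a:ℝ)+1) + c^2) * ∑ k ∈ Finset.Icc a n, q n k := by
  set x : ℝ := Real.exp c with hxdef
  have hx1 : 1 < x := Real.one_lt_exp_iff.2 hc0
  have hx36 : x < 36/13 := by
    have h1 : x ≤ Real.exp 1 := Real.exp_le_exp.2 (le_of_lt hc1)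
    have := Real.exp_one_lt_d9
    calc x ≤ Real.exp 1 := h1
      _ < 2.7182818286 := this
      _ < 36/13 := by norm_num
  have hx3 : x ≤ 3 := by linarith
  have hxc : x ≤ 1 + c + c^2 := by
    have h2 := Real.exp_bound' (le_of_lt hc0) (le_of_lt hc1) (n := 2) (by norm_num)
    have h3 : (∑ m ∈ Finset.range 2, c ^ m / m.factorial) = 1 + c := by
      simp [Finset.sum_range_succ]
    rw [h3] at h2
    have : c^2 * (2+1)/((2:ℕ).factorial * 2) ≤ c^2 := by
      norm_num [Nat.factorial]
      nlinarith
    calc x ≤ 1 + c + c^2 * ((2:ℕ)+1)/((2:ℕ).factorial * 2) := by exact_mod_cast h2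
      _ ≤ 1 + c + c^2 := by norm_num [Nat.factorial]; nlinarith
  set M : ℝ := Real.exp (c + c^2) with hMdef
  have hMx : x ≤ M := Real.exp_le_exp.2 (by nlinarith)
  have hM1 : 1 + (c + c^2) ≤ M := by
    have := Real.add_one_le_exp (c + c^2)
    linarith
  rcases le_or_gt a n with han | han
  swap
  · rw [Finset.Icc_eq_empty (by omega)]
    simp
  -- main case
  have hq3 : 3 * q n (a+1) ≤ q n a := by
    have h1 := q_succ_mul hn (k := a) (by omega)
    have h2 : (3:ℝ) ≤ (a:ℝ) + 1 := by
      have : (2:ℝ) ≤ (a:ℝ) := by exact_mod_cast ha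
      linarith
    nlinarith [q_nonneg hn (a+1)]
  set N : ℕ := n + 1 - a with hNdef
  have hN1 : 1 ≤ N := by omega
  have hIcc : ∀ g : ℕ → ℝ, ∑ k ∈ Finset.Icc a n, g k = ∑ j ∈ Finset.range N, g (a + j) := by
    intro g
    rw [← Finset.Ico_add_one_right_eq_Icc, Finset.sum_Ico_eq_sum_range]
  rw [hIcc, hIcc]
  have hsuff : ∑ j ∈ Finset.range N, x^j * q n (a+j) ≤ M * ∑ j ∈ Finset.range N, q n (a+j) := by
    rw [← sub_nonneg, Finset.mul_sum, ← Finset.sum_sub_distrib]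
    have hterm : ∀ j ∈ Finset.range N, M * q n (a+j) - x^j * q n (a+j) = (M - x^j) * q n (a+j) := by
      intro j _; ring
    rw [Finset.sum_congr rfl hterm]
    rcases lt_or_ge N 2 with hN2 | hN2
    · interval_cases N
      · rw [Finset.sum_range_one]
        have hq := q_nonneg hn (a+0)
        have : (1:ℝ) ≤ M := by nlinarith
        simp only [pow_zero]
        nlinarith
    · have hsplit : ∑ j ∈ Finset.Ico 0 2, (M - x^j) * q n (a+j)
          + ∑ j ∈ Finset.Ico 2 N, (M - x^j) * q n (a+j)
          = ∑ j ∈ Finset.range N, (M - x^j) * q n (a+j) := by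
        rw [Finset.range_eq_Ico]
        exact Finset.sum_Ico_consecutive _ (by omega) hN2
      rw [← hsplit]
      have h01 : ∑ j ∈ Finset.Ico 0 2, (M - x^j) * q n (a+j)
          = (M - 1) * q n a + (M - x) * q n (a+1) := by
        rw [← Finset.range_eq_Ico, Finset.sum_range_succ, Finset.sum_range_one]
        norm_num
      have hPos : ∑ j ∈ Finset.Ico 2 N, (x^j - x) * q n (a+j) ≤ (c + c^2) * q n a := by
        rw [Finset.sum_Ico_eq_sum_range]
        have htw : ∀ i ∈ Finset.range (N - 2), (x^(2+i) - x) * q n (a+(2+i))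
            ≤ (x * q n (a+1)) * ((x^(i+1) - 1)/4^(i+1)) := by
          intro i _
          have e1 : x^(2+i) - x = x * (x^(i+1) - 1) := by
            rw [show 2+i = (i+1)+1 by omega, pow_succ]; ring
          have e2 : q n (a+(2+i)) ≤ q n (a+1) / 4^(i+1) := by
            have := q_tail hn ha (i+1)
            convert this using 2
            omega
          have e3 : 0 ≤ x * (x^(i+1) - 1) := by
            have : 1 ≤ x^(i+1) := one_le_pow₀ (le_of_lt hx1)
            nlinarith
          calc (x^(2+i) - x) * q n (a+(2+i)) = (x * (x^(i+1) - 1)) * q n (a+(2+i)) := by rw [e1]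
            _ ≤ (x * (x^(i+1) - 1)) * (q n (a+1) / 4^(i+1)) := by
                exact mul_le_mul_of_nonneg_left e2 e3
            _ = (x * q n (a+1)) * ((x^(i+1) - 1)/4^(i+1)) := by ring
        calc ∑ i ∈ Finset.range (N-2), (x^(2+i) - x) * q n (a+(2+i))
            ≤ ∑ i ∈ Finset.range (N-2), (x * q n (a+1)) * ((x^(i+1) - 1)/4^(i+1)) :=
              Finset.sum_le_sum htw
          _ = (x * q n (a+1)) * ∑ i ∈ Finset.range (N-2), (x^(i+1) - 1)/4^(i+1) := by
              rw [Finset.mul_sum]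
          _ ≤ (x * q n (a+1)) * (4*(x-1)/(3*(4-x))) := by
              apply mul_le_mul_of_nonneg_left (geom_aux (le_of_lt hx1) hx3 _)
              have := q_nonneg hn (a+1)
              positivity
          _ ≤ 3 * (x - 1) * q n (a+1) := by
              have h4x : (0:ℝ) < 4 - x := by linarith
              have hq1 := q_nonneg hn (a+1)
              have hfrac : x * (4/(3*(4-x))) ≤ 3 := by
                rw [mul_div_assoc'] at *
                rw [div_le_iff₀ (by positivity)]
                nlinarith
              have e4 : (x * q n (a+1)) * (4*(x-1)/(3*(4-x)))
                  = (x * (4/(3*(4-x)))) * ((x-1) * q n (a+1)) := by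
                field_simp
              rw [e4]
              have e5 : 0 ≤ (x-1) * q n (a+1) := by nlinarith
              calc (x * (4/(3*(4-x)))) * ((x-1) * q n (a+1)) ≤ 3 * ((x-1) * q n (a+1)) :=
                mul_le_mul_of_nonneg_right hfrac e5
                _ = 3 * (x-1) * q n (a+1) := by ring
          _ ≤ 3 * (c + c^2) * q n (a+1) := by
              have hq1 := q_nonneg hn (a+1)
              nlinarith
          _ ≤ (c + c^2) * q n a := by nlinarith [hq3, hc0]
      have hT2 : ∑ j ∈ Finset.Ico 2 N, (M - x^j) * q n (a+j)
          ≥ - ((c + c^2) * q n a) := by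
        have : ∀ j ∈ Finset.Ico 2 N, -((x^j - x) * q n (a+j)) ≤ (M - x^j) * q n (a+j) := by
          intro j _
          have hq := q_nonneg hn (a+j)
          nlinarith
        calc -((c + c^2) * q n a) ≤ -∑ j ∈ Finset.Ico 2 N, (x^j - x) * q n (a+j) := by
              linarith [hPos]
          _ = ∑ j ∈ Finset.Ico 2 N, -((x^j - x) * q n (a+j)) := by rw [Finset.sum_neg_distrib]
          _ ≤ ∑ j ∈ Finset.Ico 2 N, (M - x^j) * q n (a+j) := Finset.sum_le_sum this
      rw [h01]
      have hqa := q_nonneg hn a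
      have hqa1 := q_nonneg hn (a+1)
      nlinarith [hT2, hM1, hMx]
  calc ∑ j ∈ Finset.range N, Real.exp (c*((a+j : ℕ) : ℝ)) * q n (a+j)
      = Real.exp (c*a) * ∑ j ∈ Finset.range N, x^j * q n (a+j) := by
        rw [Finset.mul_sum]
        apply Finset.sum_congr rfl
        intro j _
        rw [← mul_assoc, ← Real.exp_nat_mul, ← Real.exp_add]
        congr 2
        push_cast
        ring
    _ ≤ Real.exp (c*a) * (M * ∑ j ∈ Finset.range N, q n (a+j)) := by
        apply mul_le_mul_of_nonneg_left hsuff (le_of_lt (Real.exp_pos _))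
    _ = Real.exp (c*((a:ℝ)+1) + c^2) * ∑ j ∈ Finset.range N, q n (a+j) := by
        rw [← mul_assoc, ← Real.exp_add]
        congr 2
        ring

section Walk

variable {Ω : Type*} [MeasurableSpace Ω]

lemma walk_zero (ξ : ℕ → Ω → ℕ) (ω : Ω) : walk ξ 0 ω = 1 := by
  simp [walk]

lemma walk_succ (ξ : ℕ → Ω → ℕ) (t : ℕ) (ω : Ω) :
    walk ξ (t+1) ω = walk ξ t ω + ((ξ (t+1) ω : ℤ) - 1) := by
  unfold walk
  rw [Finset.sum_Icc_succ_top (by omega : 1 ≤ t+1)]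
  ring

lemma measurable_walk {ξ : ℕ → Ω → ℕ} (hmeas : ∀ i, Measurable (ξ i)) (t : ℕ) :
    Measurable (fun ω => walk ξ t ω) := by
  unfold walk
  apply Measurable.add measurable_const
  apply Finset.measurable_sum
  intro i _
  exact (measurable_from_top (f := fun m : ℕ => ((m:ℤ) - 1))).comp (hmeas i)

lemma walk_ge (ξ : ℕ → Ω → ℕ) (t : ℕ) (ω : Ω) : walk ξ t ω - 1 ≤ walk ξ (t+1) ω := by
  rw [walk_succ]
  have : (0:ℤ) ≤ (ξ (t+1) ω : ℤ) := by positivity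
  omega

lemma walk_pos (ξ : ℕ → Ω → ℕ) (ω : Ω) {m : ℕ}
    (h : ∀ v, 1 ≤ v → v ≤ m → walk ξ v ω ≠ 0) : ∀ u, u ≤ m → 0 < walk ξ u ω := by
  intro u
  induction u with
  | zero => intro _; rw [walk_zero]; norm_num
  | succ u ih =>
    intro hum
    have h1 := ih (by omega)
    have h2 := walk_ge ξ u ω
    have h3 := h (u+1) (by omega) hum
    omega

lemma walk_le_of_good {ξ : ℕ → Ω → ℕ} {n m : ℕ} {ω : Ω}
    (hgood : ∀ i, 1 ≤ i → i ≤ m → ξ i ω ≤ n) {t : ℕ} (htm : t ≤ m) :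
    walk ξ t ω ≤ 1 + (t:ℤ) * ((n:ℤ) - 1) := by
  unfold walk
  have hsum : ∑ i ∈ Finset.Icc 1 t, ((ξ i ω : ℤ) - 1) ≤ ∑ _i ∈ Finset.Icc 1 t, ((n:ℤ) - 1) := by
    apply Finset.sum_le_sum
    intro i hi
    rw [Finset.mem_Icc] at hi
    have := hgood i hi.1 (le_trans hi.2 htm)
    omega
  have hcard : ∑ _i ∈ Finset.Icc 1 t, ((n:ℤ) - 1) = (t:ℤ) * ((n:ℤ) - 1) := by
    rw [Finset.sum_const, Nat.card_Icc]
    simp [nsmul_eq_mul]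
  omega

lemma hitTime_eq {ξ : ℕ → Ω → ℕ} {H : ℕ} {ω : Ω} {t : ℕ} (ht : 1 ≤ t)
    (h1 : (H:ℤ) ≤ walk ξ t ω ∨ walk ξ t ω = 0)
    (h2 : ∀ u, 1 ≤ u → u < t → ¬((H:ℤ) ≤ walk ξ u ω ∨ walk ξ u ω = 0)) :
    hitTime ξ H ω = t := by
  unfold hitTime
  apply le_antisymm (Nat.sInf_le (show t ∈ {t | 1 ≤ t ∧ ((H:ℤ) ≤ walk ξ t ω ∨ walk ξ t ω = 0)} from ⟨ht, h1⟩))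
  by_contra hlt
  push_neg at hlt
  have hnon : {t | 1 ≤ t ∧ ((H:ℤ) ≤ walk ξ t ω ∨ walk ξ t ω = 0)}.Nonempty := ⟨t, ht, h1⟩
  have hmem := Nat.sInf_mem hnon
  exact h2 _ hmem.1 hlt hmem.2

/-- The event that the walk stays in `(0,H)` up to time `t-1` and equals `s` at time `t-1`. -/
def Gset (ξ : ℕ → Ω → ℕ) (H t s : ℕ) : Set Ω :=
  {ω | (∀ u, 1 ≤ u → u < t → (0 < walk ξ u ω ∧ walk ξ u ω < (H:ℤ))) ∧ walk ξ (t-1) ω = (s:ℤ)}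

def piece (ξ : ℕ → Ω → ℕ) (H t s k : ℕ) : Set Ω := Gset ξ H t s ∩ (ξ t)⁻¹' {k}

lemma measurableSet_Gset {ξ : ℕ → Ω → ℕ} (hmeas : ∀ i, Measurable (ξ i)) (H t s : ℕ) :
    MeasurableSet (Gset ξ H t s) := by
  have hw := measurable_walk hmeas
  have hrw : Gset ξ H t s =
      (⋂ u, {ω | 1 ≤ u → u < t → (0 < walk ξ u ω ∧ walk ξ u ω < (H:ℤ))})
        ∩ ((fun ω => walk ξ (t-1) ω) ⁻¹' {(s:ℤ)}) := by
    ext ω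
    simp only [Gset, Set.mem_setOf_eq, Set.mem_inter_iff, Set.mem_iInter, Set.mem_preimage,
      Set.mem_singleton_iff]
  rw [hrw]
  apply MeasurableSet.inter
  · apply MeasurableSet.iInter
    intro u
    by_cases h1 : 1 ≤ u ∧ u < t
    · have : {ω | 1 ≤ u → u < t → (0 < walk ξ u ω ∧ walk ξ u ω < (H:ℤ))}
          = (fun ω => walk ξ u ω) ⁻¹' {z | 0 < z ∧ z < (H:ℤ)} := by
        ext ω
        simp [h1.1, h1.2]
      rw [this]
      exact hw u (by trivial)
    · have : {ω | 1 ≤ u → u < t → (0 < walk ξ u ω ∧ walk ξ u ω < (H:ℤ))} = Set.univ := by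
        ext ω
        simp only [Set.mem_setOf_eq, Set.mem_univ, iff_true]
        intro hu1 hut
        exact absurd ⟨hu1, hut⟩ h1
      rw [this]
      exact MeasurableSet.univ
  · exact hw (t-1) (measurableSet_singleton _)

lemma measurableSet_piece {ξ : ℕ → Ω → ℕ} (hmeas : ∀ i, Measurable (ξ i)) (H t s k : ℕ) :
    MeasurableSet (piece ξ H t s k) :=
  (measurableSet_Gset hmeas H t s).inter (hmeas t (measurableSet_singleton k))

lemma piece_spec {ξ : ℕ → Ω → ℕ} {H t s k : ℕ} (hH2 : 2 ≤ H) (ht1 : 1 ≤ t) (htH : t ≤ H^2)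
    (hsk : H + 1 ≤ s + k) {ω : Ω} (hω : ω ∈ piece ξ H t s k) :
    min (hitTime ξ H ω) (H^2) = t ∧ walk ξ t ω = (s:ℤ) + (k:ℤ) - 1 := by
  obtain ⟨⟨hpast, hprev⟩, hk⟩ := hω
  have hk' : ξ t ω = k := hk
  have hwt : walk ξ t ω = (s:ℤ) + (k:ℤ) - 1 := by
    have h := walk_succ ξ (t-1) ω
    rw [show t-1+1 = t by omega] at h
    rw [h, hprev, hk']
    ring
  have hHle : (H:ℤ) ≤ walk ξ t ω := by
    rw [hwt]; omega
  have hhit : hitTime ξ H ω = t := by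
    apply hitTime_eq ht1 (Or.inl hHle)
    intro u hu1 hut hor
    have := hpast u hu1 hut
    rcases hor with h | h <;> omega
  rw [hhit]
  exact ⟨min_eq_left htH, hwt⟩

lemma piece_cover {ξ : ℕ → Ω → ℕ} {H n : ℕ} (hH2 : 2 ≤ H) {ω : Ω}
    (hgood : ∀ i, 1 ≤ i → i ≤ H^2 → ξ i ω ≤ n)
    (hX : (H:ℤ) ≤ walk ξ (min (hitTime ξ H ω) (H^2)) ω) :
    ∃ t s k, (1 ≤ t ∧ t ≤ H^2) ∧ (1 ≤ s ∧ s < H) ∧ (k ≤ n ∧ H + 1 ≤ s + k) ∧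
      ω ∈ piece ξ H t s k := by
  have hH2' : 1 ≤ H^2 := by nlinarith
  have hS : hitTime ξ H ω = sInf {u | 1 ≤ u ∧ ((H:ℤ) ≤ walk ξ u ω ∨ walk ξ u ω = 0)} := rfl
  by_cases hne : {u | 1 ≤ u ∧ ((H:ℤ) ≤ walk ξ u ω ∨ walk ξ u ω = 0)}.Nonempty
  swap
  · rw [Set.not_nonempty_iff_eq_empty] at hne
    rw [hS, hne, Nat.sInf_empty, show min 0 (H^2) = 0 by omega, walk_zero] at hX
    omega
  have hmem := Nat.sInf_mem hne
  rw [← hS] at hmem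
  have hγ1 : 1 ≤ hitTime ξ H ω := hmem.1
  have hnotbefore : ∀ u, 1 ≤ u → u < hitTime ξ H ω →
      (walk ξ u ω < (H:ℤ) ∧ walk ξ u ω ≠ 0) := by
    intro u hu1 hlt
    have h2 : ¬ ((H:ℤ) ≤ walk ξ u ω ∨ walk ξ u ω = 0) := by
      intro hin
      have hle := Nat.sInf_le (show u ∈ {u | 1 ≤ u ∧ ((H:ℤ) ≤ walk ξ u ω ∨ walk ξ u ω = 0)}
        from ⟨hu1, hin⟩)
      rw [← hS] at hle
      omega
    push_neg at h2
    exact ⟨h2.1, h2.2⟩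
  by_cases hγH : hitTime ξ H ω ≤ H^2
  swap
  · exfalso
    rw [min_eq_right (by omega)] at hX
    have := hnotbefore (H^2) hH2' (by omega)
    omega
  rw [min_eq_left hγH] at hX
  set γ := hitTime ξ H ω with hγdef
  have hwalkpos : ∀ u, u ≤ γ - 1 → 0 < walk ξ u ω := by
    apply walk_pos
    intro v hv1 hvm
    exact (hnotbefore v hv1 (by omega)).2
  have hspos : 0 < walk ξ (γ-1) ω := hwalkpos (γ-1) le_rfl
  have hsH : walk ξ (γ-1) ω < (H:ℤ) := by
    rcases Nat.eq_or_lt_of_le hγ1 with h1 | h1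
    · rw [show γ - 1 = 0 by omega, walk_zero]
      omega
    · exact (hnotbefore (γ-1) (by omega) (by omega)).1
  have hwγ : walk ξ γ ω = walk ξ (γ-1) ω + ((ξ γ ω : ℤ) - 1) := by
    have h := walk_succ ξ (γ-1) ω
    rw [show γ-1+1 = γ by omega] at h
    exact h
  refine ⟨γ, (walk ξ (γ-1) ω).toNat, ξ γ ω, ⟨hγ1, hγH⟩, ⟨by omega, by omega⟩,
    ⟨hgood γ hγ1 hγH, by omega⟩, ⟨?_, ?_⟩, rfl⟩
  · intro u hu1 hut
    have h2 := hnotbefore u hu1 hut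
    exact ⟨hwalkpos u (by omega), h2.1⟩
  · omega

end Walk

section Binom

lemma binomialMeasure_singleton (n : ℕ) (p : ℝ) (k : ℕ) :
    binomialMeasure n p {k} = ENNReal.ofReal ((n.choose k : ℝ) * p ^ k * (1 - p) ^ (n - k)) := by
  rw [binomialMeasure, Measure.sum_apply _ (measurableSet_singleton k)]
  rw [tsum_eq_single k]
  · rw [Measure.smul_apply, Measure.dirac_apply' _ (measurableSet_singleton k)]
    simp
  · intro j hj
    rw [Measure.smul_apply, Measure.dirac_apply' _ (measurableSet_singleton k)]
    simp [Set.indicator, hj]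

lemma binomialMeasure_tail (n : ℕ) (p : ℝ) : binomialMeasure n p (Set.Ici (n+1)) = 0 := by
  rw [binomialMeasure, Measure.sum_apply _ measurableSet_Ici]
  apply ENNReal.tsum_eq_zero.2
  intro j
  rw [Measure.smul_apply, Measure.dirac_apply' _ measurableSet_Ici]
  by_cases hj : n+1 ≤ j
  · have h0 : (n.choose j : ℝ) = 0 := by
      rw [Nat.choose_eq_zero_of_lt (by omega)]
      simp
    simp [h0]
  · have : j ∉ Set.Ici (n+1) := by simp [Set.mem_Ici]; omega
    simp [Set.indicator_of_notMem this]

end Binom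

section Indep

variable {Ω : Type*} [MeasurableSpace Ω] {μ : Measure Ω}

lemma meas_piece {ξ : ℕ → Ω → ℕ} (hmeas : ∀ i, Measurable (ξ i))
    (hindep : iIndepFun ξ μ)
    {n : ℕ} (hdist : ∀ i, μ.map (ξ i) = binomialMeasure n (1 / (n : ℝ)))
    (H : ℕ) {t : ℕ} (ht : 1 ≤ t) (s k : ℕ) :
    μ (piece ξ H t s k) = μ (Gset ξ H t s) * ENNReal.ofReal (q n k) := by
  classical
  set Sf : Finset ℕ := Finset.Icc 1 (t-1) with hSf
  set prj : Ω → (Sf → ℕ) := fun ω i => ξ i ω with hprjdef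
  have hprjm : Measurable prj := measurable_pi_lambda _ (fun i => hmeas i)
  set wk : ℕ → (Sf → ℕ) → ℤ := fun u v =>
    1 + ∑ i ∈ Finset.Icc 1 u, (if h : i ∈ Sf then ((v ⟨i, h⟩ : ℤ) - 1) else 0) with hwkdef
  have hwkm : ∀ u, Measurable (wk u) := by
    intro u
    apply Measurable.add measurable_const
    apply Finset.measurable_sum
    intro i _
    by_cases h : i ∈ Sf
    · simp only [dif_pos h]
      exact (measurable_from_top (f := fun m : ℕ => ((m:ℤ) - 1))).comp (measurable_pi_apply _)
    · simp only [dif_neg h]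
      exact measurable_const
  set B : Set (Sf → ℕ) :=
    {v | (∀ u, 1 ≤ u → u < t → (0 < wk u v ∧ wk u v < (H:ℤ))) ∧ wk (t-1) v = (s:ℤ)} with hBdef
  have hBm : MeasurableSet B := by
    have hrw : B = (⋂ u, {v | 1 ≤ u → u < t → (0 < wk u v ∧ wk u v < (H:ℤ))})
        ∩ ((wk (t-1)) ⁻¹' {(s:ℤ)}) := by
      ext v
      simp only [hBdef, Set.mem_setOf_eq, Set.mem_inter_iff, Set.mem_iInter, Set.mem_preimage,
        Set.mem_singleton_iff]
    rw [hrw]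
    apply MeasurableSet.inter
    · apply MeasurableSet.iInter
      intro u
      by_cases h1 : 1 ≤ u ∧ u < t
      · have heq : {v | 1 ≤ u → u < t → (0 < wk u v ∧ wk u v < (H:ℤ))}
            = (wk u) ⁻¹' {z | 0 < z ∧ z < (H:ℤ)} := by
          ext v
          simp [h1.1, h1.2]
        rw [heq]
        exact hwkm u (by trivial)
      · have heq : {v | 1 ≤ u → u < t → (0 < wk u v ∧ wk u v < (H:ℤ))} = Set.univ := by
          ext v
          simp only [Set.mem_setOf_eq, Set.mem_univ, iff_true]
          intro a b
          exact absurd ⟨a, b⟩ h1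
        rw [heq]
        exact MeasurableSet.univ
    · exact hwkm (t-1) (measurableSet_singleton _)
  have hwkeq : ∀ u, u ≤ t-1 → ∀ ω, wk u (prj ω) = walk ξ u ω := by
    intro u hu ω
    simp only [hwkdef, hprjdef, walk]
    congr 1
    apply Finset.sum_congr rfl
    intro i hi
    rw [Finset.mem_Icc] at hi
    rw [dif_pos (show i ∈ Sf by rw [hSf, Finset.mem_Icc]; omega)]
  have hGB : Gset ξ H t s = prj ⁻¹' B := by
    ext ω
    simp only [Gset, Set.mem_setOf_eq, Set.mem_preimage, hBdef]
    constructor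
    · rintro ⟨h1, h2⟩
      exact ⟨fun u hu1 hut => by rw [hwkeq u (by omega)]; exact h1 u hu1 hut,
        by rw [hwkeq (t-1) le_rfl]; exact h2⟩
    · rintro ⟨h1, h2⟩
      exact ⟨fun u hu1 hut => by rw [← hwkeq u (by omega)]; exact h1 u hu1 hut,
        by rw [← hwkeq (t-1) le_rfl]; exact h2⟩
  have hdisj : Disjoint Sf ({t} : Finset ℕ) := by
    rw [Finset.disjoint_right]
    intro a ha
    rw [Finset.mem_singleton] at ha
    subst ha
    rw [hSf, Finset.mem_Icc]
    omega
  have hind0 := hindep.indepFun_finset Sf {t} hdisj hmeas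
  have hind : IndepFun prj (ξ t) μ := by
    have h2 := hind0.comp (measurable_id (α := ({x // x ∈ Sf} → ℕ)))
      (measurable_pi_apply (⟨t, Finset.mem_singleton_self t⟩ : ({t} : Finset ℕ)))
    exact h2
  have hres := hind.measure_inter_preimage_eq_mul (s := B) (t := {k}) hBm
    (measurableSet_singleton k)
  have hsing : μ (ξ t ⁻¹' {k}) = ENNReal.ofReal (q n k) := by
    rw [← Measure.map_apply (hmeas t) (measurableSet_singleton k), hdist t,
      binomialMeasure_singleton]
    rfl
  show μ (Gset ξ H t s ∩ ξ t ⁻¹' {k}) = μ (Gset ξ H t s) * ENNReal.ofReal (q n k)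
  rw [hGB, hres, hsing]

lemma measurableSet_hitTime_eq {ξ : ℕ → Ω → ℕ} (hmeas : ∀ i, Measurable (ξ i)) (H t : ℕ) :
    MeasurableSet {ω | hitTime ξ H ω = t} := by
  have hD : ∀ u, MeasurableSet {ω | 1 ≤ u ∧ ((H:ℤ) ≤ walk ξ u ω ∨ walk ξ u ω = 0)} := by
    intro u
    by_cases hu : 1 ≤ u
    · have heq : {ω | 1 ≤ u ∧ ((H:ℤ) ≤ walk ξ u ω ∨ walk ξ u ω = 0)}
          = (fun ω => walk ξ u ω) ⁻¹' {z | (H:ℤ) ≤ z ∨ z = 0} := by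
        ext ω
        simp [hu]
      rw [heq]
      exact measurable_walk hmeas u (by trivial)
    · have heq : {ω | 1 ≤ u ∧ ((H:ℤ) ≤ walk ξ u ω ∨ walk ξ u ω = 0)} = ∅ := by
        ext ω
        simp [hu]
      rw [heq]
      exact MeasurableSet.empty
  cases t with
  | zero =>
    have heq : {ω | hitTime ξ H ω = 0}
        = ⋂ u, {ω | 1 ≤ u ∧ ((H:ℤ) ≤ walk ξ u ω ∨ walk ξ u ω = 0)}ᶜ := by
      ext ω
      simp only [Set.mem_setOf_eq, Set.mem_iInter, Set.mem_compl_iff]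
      constructor
      · intro h0 u hu
        have hne : {u | 1 ≤ u ∧ ((H:ℤ) ≤ walk ξ u ω ∨ walk ξ u ω = 0)}.Nonempty := ⟨u, hu⟩
        have hmem := Nat.sInf_mem hne
        have : hitTime ξ H ω = sInf {u | 1 ≤ u ∧ ((H:ℤ) ≤ walk ξ u ω ∨ walk ξ u ω = 0)} := rfl
        rw [h0] at this
        rw [← this] at hmem
        exact absurd hmem.1 (by omega)
      · intro h
        have hempty : {u | 1 ≤ u ∧ ((H:ℤ) ≤ walk ξ u ω ∨ walk ξ u ω = 0)} = ∅ := by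
          ext u
          simp only [Set.mem_setOf_eq, Set.mem_empty_iff_false, iff_false]
          exact h u
        show sInf _ = 0
        rw [hempty, Nat.sInf_empty]
    rw [heq]
    exact MeasurableSet.iInter (fun u => (hD u).compl)
  | succ m =>
    have heq : {ω | hitTime ξ H ω = m+1}
        = {ω | 1 ≤ m+1 ∧ ((H:ℤ) ≤ walk ξ (m+1) ω ∨ walk ξ (m+1) ω = 0)}
          ∩ ⋂ u, {ω | 1 ≤ u → u < m+1 → ¬(1 ≤ u ∧ ((H:ℤ) ≤ walk ξ u ω ∨ walk ξ u ω = 0))} := by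
      ext ω
      simp only [Set.mem_setOf_eq, Set.mem_inter_iff, Set.mem_iInter]
      constructor
      · intro h0
        have hne : {u | 1 ≤ u ∧ ((H:ℤ) ≤ walk ξ u ω ∨ walk ξ u ω = 0)}.Nonempty := by
          by_contra hcon
          rw [Set.not_nonempty_iff_eq_empty] at hcon
          have : hitTime ξ H ω = 0 := by
            show sInf _ = 0
            rw [hcon, Nat.sInf_empty]
          omega
        have hmem := Nat.sInf_mem hne
        have hdef : hitTime ξ H ω = sInf {u | 1 ≤ u ∧ ((H:ℤ) ≤ walk ξ u ω ∨ walk ξ u ω = 0)} := rfl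
        rw [h0] at hdef
        rw [← hdef] at hmem
        refine ⟨hmem, ?_⟩
        intro u hu1 hum hin
        have hle : sInf {u | 1 ≤ u ∧ ((H:ℤ) ≤ walk ξ u ω ∨ walk ξ u ω = 0)} ≤ u :=
          Nat.sInf_le hin
        have : hitTime ξ H ω ≤ u := hle
        omega
      · rintro ⟨hmem1, hall⟩
        apply hitTime_eq (by omega) hmem1.2
        intro u hu1 hum hor
        exact hall u hu1 hum ⟨hu1, hor⟩
    rw [heq]
    apply (hD (m+1)).inter
    apply MeasurableSet.iInter
    intro u
    by_cases h1 : 1 ≤ u ∧ u < m+1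
    · have heq2 : {ω | 1 ≤ u → u < m+1 → ¬(1 ≤ u ∧ ((H:ℤ) ≤ walk ξ u ω ∨ walk ξ u ω = 0))}
          = {ω | 1 ≤ u ∧ ((H:ℤ) ≤ walk ξ u ω ∨ walk ξ u ω = 0)}ᶜ := by
        ext ω
        simp [h1.1, h1.2]
      rw [heq2]
      exact (hD u).compl
    · have heq2 : {ω | 1 ≤ u → u < m+1 → ¬(1 ≤ u ∧ ((H:ℤ) ≤ walk ξ u ω ∨ walk ξ u ω = 0))}
          = Set.univ := by
        ext ω
        simp only [Set.mem_setOf_eq, Set.mem_univ, iff_true]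
        intro a b
        exact absurd ⟨a, b⟩ h1
      rw [heq2]
      exact MeasurableSet.univ

end Indep

lemma key_weighted {n : ℕ} (hn : 2 ≤ n) {H s : ℕ} (hs1 : 1 ≤ s) (hsH : s < H)
    {c : ℝ} (hc0 : 0 < c) (hc1 : c < 1) (m : ℝ) (hm : 0 ≤ m) :
    ∑ k ∈ Finset.Icc 0 n,
        (if H + 1 ≤ s + k then Real.exp (c * ((s:ℝ) + (k:ℝ) - 1)) * (m * q n k) else 0)
      ≤ Real.exp (c*(H:ℝ) + c + c^2)
          * ∑ k ∈ Finset.Icc 0 n, (if H + 1 ≤ s + k then m * q n k else 0) := by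
  have ha2 : 2 ≤ H + 1 - s := by omega
  have hfil : ∀ (g : ℕ → ℝ), (∑ k ∈ Finset.Icc 0 n, (if H + 1 ≤ s + k then g k else 0))
      = ∑ k ∈ Finset.Icc (H+1-s) n, g k := by
    intro g
    rw [← Finset.sum_filter]
    congr 1
    ext k
    simp only [Finset.mem_filter, Finset.mem_Icc]
    omega
  rw [hfil, hfil]
  have hkey := key (n := n) hn ha2 hc0 hc1
  have hterm : ∀ k : ℕ, Real.exp (c * ((s:ℝ) + (k:ℝ) - 1)) * (m * q n k)
      = (m * Real.exp (c*((s:ℝ)-1))) * (Real.exp (c*(k:ℝ)) * q n k) := by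
    intro k
    rw [show c * ((s:ℝ) + (k:ℝ) - 1) = c*((s:ℝ)-1) + c*(k:ℝ) by ring, Real.exp_add]
    ring
  rw [Finset.sum_congr rfl (fun k _ => hterm k), ← Finset.mul_sum]
  have hacast : ((H+1-s : ℕ) : ℝ) = (H:ℝ) + 1 - (s:ℝ) := by
    rw [Nat.cast_sub (by omega)]
    push_cast
    ring
  have hexp : Real.exp (c*((s:ℝ)-1)) * Real.exp (c*(((H+1-s:ℕ):ℝ)+1) + c^2)
      = Real.exp (c*(H:ℝ) + c + c^2) := by
    rw [← Real.exp_add]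
    congr 1
    rw [hacast]
    ring
  calc (m * Real.exp (c*((s:ℝ)-1))) * ∑ k ∈ Finset.Icc (H+1-s) n, Real.exp (c*(k:ℝ)) * q n k
      ≤ (m * Real.exp (c*((s:ℝ)-1)))
          * (Real.exp (c*(((H+1-s:ℕ):ℝ)+1) + c^2) * ∑ k ∈ Finset.Icc (H+1-s) n, q n k) := by
        apply mul_le_mul_of_nonneg_left hkey (by positivity)
    _ = Real.exp (c*(H:ℝ) + c + c^2) * ∑ k ∈ Finset.Icc (H+1-s) n, m * q n k := by
        rw [Finset.mul_sum, Finset.mul_sum, Finset.mul_sum]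
        apply Finset.sum_congr rfl
        intro k _
        rw [show (m * Real.exp (c*((s:ℝ)-1))) * (Real.exp (c*(((H+1-s:ℕ):ℝ)+1) + c^2) * q n k)
          = (Real.exp (c*((s:ℝ)-1)) * Real.exp (c*(((H+1-s:ℕ):ℝ)+1) + c^2)) * (m * q n k) by ring,
          hexp]

end NPaux

open NPaux in
set_option maxHeartbeats 2000000 in
/-- **Inequality before (8), Nachmias–Peres.** For the Bin(n,1/n) walk, `2 ≤ H ≤ n-3`,
`γ* = γ ∧ H²` and `c ∈ (0,1)`, `E[e^{c S_{γ*}} | S_{γ*} > 0] ≤ exp(cH + c + c²)`. -/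
theorem exp_moment_stopped_walk {Ω : Type*} [MeasurableSpace Ω] (μ : Measure Ω)
    [IsProbabilityMeasure μ] (n : ℕ) (hn : 2 ≤ n)
    (ξ : ℕ → Ω → ℕ) (hmeas : ∀ i, Measurable (ξ i))
    (hdist : ∀ i, μ.map (ξ i) = binomialMeasure n (1 / (n : ℝ)))
    (hindep : iIndepFun ξ μ)
    (H : ℕ) (hH2 : 2 ≤ H) (hHn : (H : ℤ) ≤ (n : ℤ) - 3)
    (c : ℝ) (hc0 : 0 < c) (hc1 : c < 1) :
    ∫ ω, Real.exp (c * ((walk ξ (min (hitTime ξ H ω) (H ^ 2)) ω : ℤ) : ℝ))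
        ∂(μ[|{ω | 0 < walk ξ (min (hitTime ξ H ω) (H ^ 2)) ω}]) ≤
      Real.exp (c * (H : ℝ) + c + c ^ 2) := by
  classical
  have hHn' : H + 3 ≤ n := by omega
  have hH2' : 1 ≤ H^2 := by nlinarith
  set T : Ω → ℕ := fun ω => min (hitTime ξ H ω) (H^2) with hTdef
  set X : Ω → ℤ := fun ω => walk ξ (min (hitTime ξ H ω) (H^2)) ω with hXdef
  set f : Ω → ℝ := fun ω => Real.exp (c * ((X ω : ℤ) : ℝ)) with hfdef
  set A : Set Ω := {ω | 0 < X ω} with hAdef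
  set A₂ : Set Ω := {ω | (H:ℤ) ≤ X ω} with hA2def
  set E : ℝ := Real.exp (c * (H:ℝ) + c + c^2) with hEdef
  -- measurability of X
  have hTle : ∀ ω, T ω ≤ H^2 := fun ω => min_le_right _ _
  have hXm : Measurable X := by
    have hrep : X = fun ω => ∑ t ∈ Finset.range (H^2+1), if T ω = t then walk ξ t ω else 0 := by
      funext ω
      rw [Finset.sum_ite_eq, if_pos (Finset.mem_range.2 (by have := hTle ω; omega))]
    rw [hrep]
    apply Finset.measurable_sum
    intro t _
    apply Measurable.ite ?_ (measurable_walk hmeas t) measurable_const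
    rcases lt_trichotomy t (H^2) with h | h | h
    · have heq : {a | T a = t} = {a | hitTime ξ H a = t} := by
        ext a
        simp only [hTdef, Set.mem_setOf_eq]
        omega
      rw [heq]
      exact measurableSet_hitTime_eq hmeas H t
    · have heq : {a | T a = t} = (⋃ u ∈ Set.Iio (H^2), {a | hitTime ξ H a = u})ᶜ := by
        ext a
        simp only [hTdef, Set.mem_setOf_eq, Set.mem_compl_iff, Set.mem_iUnion, Set.mem_Iio,
          not_exists]
        constructor
        · intro hm u hu he
          omega
        · intro hm
          by_cases hcase : hitTime ξ H a < H^2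
          · exact absurd rfl (hm _ hcase)
          · omega
      rw [heq]
      exact (MeasurableSet.biUnion (Set.to_countable _)
        (fun u _ => measurableSet_hitTime_eq hmeas H u)).compl
    · have heq : {a | T a = t} = ∅ := by
        ext a
        simp only [hTdef, Set.mem_setOf_eq, Set.mem_empty_iff_false, iff_false]
        omega
      rw [heq]
      exact MeasurableSet.empty
  have hfm : Measurable f := by
    apply Real.measurable_exp.comp
    exact measurable_const.mul ((measurable_from_top (f := fun z : ℤ => (z:ℝ))).comp hXm)
  -- bad set
  set Bad : Set Ω := ⋃ i ∈ Set.Icc 1 (H^2), {ω | n < ξ i ω} with hBaddef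
  have hBad0 : μ Bad = 0 := by
    rw [hBaddef]
    refine (measure_biUnion_null_iff (μ := μ) (Set.to_countable _)).2 ?_
    intro i _
    have heq : {ω | n < ξ i ω} = (ξ i) ⁻¹' (Set.Ici (n+1)) := by
      ext ω
      simp [Set.mem_Ici]
    rw [heq, ← Measure.map_apply (hmeas i) measurableSet_Ici, hdist i, binomialMeasure_tail]
  have hgood : ∀ ω, ω ∉ Bad → ∀ i, 1 ≤ i → i ≤ H^2 → ξ i ω ≤ n := by
    intro ω hω i hi1 hi2
    by_contra hcon
    exact hω (Set.mem_biUnion (Set.mem_Icc.2 ⟨hi1, hi2⟩)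
      (show ω ∈ {ω | n < ξ i ω} from not_le.mp hcon))
  -- integrability
  have hXle : ∀ ω, ω ∉ Bad → (X ω : ℝ) ≤ 1 + (H^2 : ℝ) * n := by
    intro ω hω
    have h1 : X ω ≤ 1 + (T ω : ℤ) * ((n:ℤ) - 1) :=
      walk_le_of_good (hgood ω hω) (min_le_right _ _)
    have h2 : (T ω : ℤ) ≤ ((H^2 : ℕ) : ℤ) := by exact_mod_cast hTle ω
    have h3 : X ω ≤ 1 + ((H^2:ℕ):ℤ) * (n:ℤ) := by
      have hn1 : (1:ℤ) ≤ (n:ℤ) := by exact_mod_cast (by omega : 1 ≤ n)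
      have ht0 : (0:ℤ) ≤ (T ω : ℤ) := by positivity
      nlinarith
    calc (X ω : ℝ) ≤ ((1 + ((H^2:ℕ):ℤ) * (n:ℤ) : ℤ) : ℝ) := by exact_mod_cast h3
      _ = 1 + (H^2 : ℝ) * n := by push_cast; ring
  have hint : Integrable f μ := by
    apply Integrable.mono' (integrable_const (Real.exp (c * (1 + (H^2:ℝ) * n))))
      hfm.aestronglyMeasurable
    have hae : ∀ᵐ ω ∂μ, ω ∉ Bad := by
      rw [ae_iff]
      simpa using hBad0
    filter_upwards [hae] with ω hω
    rw [Real.norm_eq_abs, abs_of_pos (Real.exp_pos _)]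
    apply Real.exp_le_exp.2
    exact mul_le_mul_of_nonneg_left (hXle ω hω) (le_of_lt hc0)
  -- positivity of μ A
  have hsub1 : (ξ 1)⁻¹' {H} ⊆ A := by
    intro ω hω
    have hω' : ξ 1 ω = H := hω
    have hw1 : walk ξ 1 ω = (H:ℤ) := by
      have h := walk_succ ξ 0 ω
      rw [walk_zero] at h
      rw [h, hω']
      ring
    have hhit : hitTime ξ H ω = 1 := by
      apply hitTime_eq le_rfl (Or.inl (le_of_eq hw1.symm))
      intro u hu1 hut
      exact absurd hu1 (by omega)
    show (0:ℤ) < walk ξ (min (hitTime ξ H ω) (H^2)) ω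
    rw [hhit, min_eq_left hH2', hw1]
    exact_mod_cast (by omega : 0 < H)
  have hApos : μ A ≠ 0 := by
    have h1 : 0 < μ ((ξ 1)⁻¹' {H}) := by
      rw [← Measure.map_apply (hmeas 1) (measurableSet_singleton H), hdist 1,
        binomialMeasure_singleton]
      exact ENNReal.ofReal_pos.2 (q_pos hn (by omega))
    have h2 := measure_mono (μ := μ) hsub1
    intro h0
    rw [h0] at h2
    exact absurd (le_antisymm h2 zero_le) (ne_of_gt h1)
  have hAfin : μ A ≠ ⊤ := measure_ne_top μ A
  have hAm : MeasurableSet A := by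
    have heq : A = X⁻¹' (Set.Ioi 0) := rfl
    rw [heq]
    exact hXm (by trivial)
  have hA2m : MeasurableSet A₂ := by
    have heq : A₂ = X⁻¹' (Set.Ici (H:ℤ)) := rfl
    rw [heq]
    exact hXm (by trivial)
  have hA2sub : A₂ ⊆ A := by
    intro ω hω
    have : (H:ℤ) ≤ X ω := hω
    show 0 < X ω
    omega
  -- pieces
  set Idx : Finset (ℕ × ℕ × ℕ) :=
    ((Finset.Icc 1 (H^2)) ×ˢ ((Finset.Icc 1 (H-1)) ×ˢ (Finset.Icc 0 n))).filter
      (fun p => H + 1 ≤ p.2.1 + p.2.2) with hIdxdef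
  set pc : ℕ × ℕ × ℕ → Set Ω := fun p => piece ξ H p.1 p.2.1 p.2.2 with hpcdef
  have hIdxmem : ∀ p : ℕ × ℕ × ℕ, p ∈ Idx ↔
      ((1 ≤ p.1 ∧ p.1 ≤ H^2) ∧ (1 ≤ p.2.1 ∧ p.2.1 ≤ H - 1) ∧ p.2.2 ≤ n ∧ H + 1 ≤ p.2.1 + p.2.2) := by
    intro p
    rw [hIdxdef, Finset.mem_filter, Finset.mem_product, Finset.mem_product]
    simp only [Finset.mem_Icc]
    omega
  have hpcm : ∀ p, MeasurableSet (pc p) := fun p => measurableSet_piece hmeas H _ _ _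
  have hspec : ∀ p ∈ Idx, ∀ ω ∈ pc p, T ω = p.1 ∧ X ω = (p.2.1:ℤ) + (p.2.2:ℤ) - 1 := by
    intro p hp ω hω
    rw [hIdxmem] at hp
    have h := piece_spec hH2 hp.1.1 hp.1.2 hp.2.2.2 hω
    refine ⟨h.1, ?_⟩
    show walk ξ (min (hitTime ξ H ω) (H^2)) ω = _
    rw [h.1]
    exact h.2
  have hdisjoint : (↑Idx : Set (ℕ×ℕ×ℕ)).PairwiseDisjoint pc := by
    intro p hp p' hp' hne
    apply Set.disjoint_left.2
    intro ω hω hω'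
    apply hne
    have h1 := hspec p (by exact_mod_cast hp) ω hω
    have h2 := hspec p' (by exact_mod_cast hp') ω hω'
    have ht : p.1 = p'.1 := by rw [← h1.1, ← h2.1]
    obtain ⟨⟨hg1, hg2⟩, hk1⟩ := hω
    obtain ⟨⟨hg1', hg2'⟩, hk1'⟩ := hω'
    have hs : p.2.1 = p'.2.1 := by
      have : ((p.2.1 : ℕ) : ℤ) = ((p'.2.1 : ℕ) : ℤ) := by
        rw [← hg2, ← hg2', ht]
      exact_mod_cast this
    have hk : p.2.2 = p'.2.2 := by
      have e1 : ξ p.1 ω = p.2.2 := hk1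
      have e2 : ξ p'.1 ω = p'.2.2 := hk1'
      rw [← e1, ← e2, ht]
    exact Prod.ext ht (Prod.ext hs hk)
  set Bu : Set Ω := ⋃ p ∈ Idx, pc p with hBudef
  have hBusub : Bu ⊆ A₂ := by
    intro ω hω
    rw [hBudef] at hω
    simp only [Set.mem_iUnion] at hω
    obtain ⟨p, hp, hω⟩ := hω
    have h := (hspec p hp ω hω).2
    show (H:ℤ) ≤ X ω
    rw [h]
    rw [hIdxmem] at hp
    have := hp.2.2.2
    omega
  have hcover : A₂ \ Bu ⊆ Bad := by
    rintro ω ⟨hω2, hωB⟩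
    by_contra hbad
    obtain ⟨t, s, k, h1, h2, h3, hpc'⟩ := piece_cover hH2 (hgood ω hbad) hω2
    apply hωB
    rw [hBudef]
    simp only [Set.mem_iUnion]
    exact ⟨(t, s, k), (hIdxmem _).2 ⟨h1, ⟨h2.1, show s ≤ H - 1 by omega⟩, h3.1, h3.2⟩, hpc'⟩
  have hBuA2ae : Bu =ᵐ[μ] A₂ := by
    rw [MeasureTheory.ae_eq_set]
    constructor
    · rw [Set.diff_eq_empty.2 hBusub]
      exact measure_empty
    · exact measure_mono_null hcover hBad0
  -- integral decomposition
  have hsplitA : ∫ ω in A, f ω ∂μ = ∫ ω in A \ A₂, f ω ∂μ + ∫ ω in A₂, f ω ∂μ := by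
    rw [← setIntegral_union disjoint_sdiff_self_left hA2m hint.integrableOn hint.integrableOn,
      Set.diff_union_of_subset hA2sub]
  have hA1b : ∫ ω in A \ A₂, f ω ∂μ ≤ Real.exp (c * (H:ℝ)) * (μ (A \ A₂)).toReal := by
    calc ∫ ω in A \ A₂, f ω ∂μ
        ≤ ∫ _ω in A \ A₂, Real.exp (c * (H:ℝ)) ∂μ := by
          apply setIntegral_mono_on hint.integrableOn
            integrableOn_const (hAm.diff hA2m)
          intro ω hω
          apply Real.exp_le_exp.2
          apply mul_le_mul_of_nonneg_left ?_ hc0.le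
          have hlt : ¬ ((H:ℤ) ≤ X ω) := hω.2
          push_neg at hlt
          exact_mod_cast le_of_lt hlt
      _ = Real.exp (c * (H:ℝ)) * (μ (A \ A₂)).toReal := by
          rw [setIntegral_const, smul_eq_mul, mul_comm]; rfl
  -- piece integrals
  have hpieceint : ∀ p ∈ Idx, ∫ ω in pc p, f ω ∂μ
      = Real.exp (c * ((p.2.1:ℝ) + (p.2.2:ℝ) - 1)) * (μ (pc p)).toReal := by
    intro p hp
    rw [setIntegral_congr_fun (hpcm p)
      (g := fun _ => Real.exp (c * ((p.2.1:ℝ) + (p.2.2:ℝ) - 1)))]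
    · rw [setIntegral_const, smul_eq_mul, mul_comm]; rfl
    · intro ω hω
      have h := (hspec p hp ω hω).2
      show Real.exp (c * ((X ω : ℤ) : ℝ)) = _
      rw [h]
      push_cast
      ring_nf
  have hpiecemeas : ∀ p ∈ Idx, (μ (pc p)).toReal
      = (μ (Gset ξ H p.1 p.2.1)).toReal * q n p.2.2 := by
    intro p hp
    rw [hIdxmem] at hp
    rw [hpcdef]
    simp only
    rw [meas_piece hmeas hindep hdist H hp.1.1 _ _, ENNReal.toReal_mul,
      ENNReal.toReal_ofReal (q_nonneg hn _)]
  -- A₂ integral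
  have hA2int : ∫ ω in A₂, f ω ∂μ = ∑ p ∈ Idx, ∫ ω in pc p, f ω ∂μ := by
    rw [← setIntegral_congr_set hBuA2ae, hBudef]
    exact integral_biUnion_finset Idx (fun p _ => hpcm p) hdisjoint (fun p _ => hint.integrableOn)
  have hA2meas' : (μ A₂).toReal = ∑ p ∈ Idx, (μ (pc p)).toReal := by
    have hm1 : μ A₂ = μ Bu := (measure_congr hBuA2ae).symm
    have hm2 : μ Bu = ∑ p ∈ Idx, μ (pc p) := by
      rw [hBudef]
      exact measure_biUnion_finset hdisjoint (fun p _ => hpcm p)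
    rw [hm1, hm2, ENNReal.toReal_sum (fun p _ => measure_ne_top μ _)]
  -- key bound on A₂ sum
  have hA2b : ∑ p ∈ Idx, ∫ ω in pc p, f ω ∂μ ≤ E * ∑ p ∈ Idx, (μ (pc p)).toReal := by
    rw [Finset.sum_congr rfl hpieceint]
    have hrw2 : ∑ p ∈ Idx, Real.exp (c * ((p.2.1:ℝ) + (p.2.2:ℝ) - 1)) * (μ (pc p)).toReal
        = ∑ p ∈ Idx, Real.exp (c * ((p.2.1:ℝ) + (p.2.2:ℝ) - 1))
            * ((μ (Gset ξ H p.1 p.2.1)).toReal * q n p.2.2) := by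
      apply Finset.sum_congr rfl
      intro p hp
      rw [hpiecemeas p hp]
    have hrw3 : ∑ p ∈ Idx, (μ (pc p)).toReal
        = ∑ p ∈ Idx, (μ (Gset ξ H p.1 p.2.1)).toReal * q n p.2.2 :=
      Finset.sum_congr rfl hpiecemeas
    rw [hrw2, hrw3, hIdxdef]
    rw [Finset.sum_filter, Finset.sum_filter, Finset.sum_product, Finset.sum_product,
      Finset.mul_sum]
    apply Finset.sum_le_sum
    intro t _
    rw [Finset.sum_product, Finset.sum_product, Finset.mul_sum]
    apply Finset.sum_le_sum
    intro s hs
    rw [Finset.mem_Icc] at hs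
    have := key_weighted hn hs.1 (by omega : s < H) hc0 hc1
      ((μ (Gset ξ H t s)).toReal) ENNReal.toReal_nonneg
    exact this
  -- put everything together
  have hmain : ∫ ω in A, f ω ∂μ ≤ E * (μ A).toReal := by
    have hEge : Real.exp (c * (H:ℝ)) ≤ E := by
      rw [hEdef]
      apply Real.exp_le_exp.2
      nlinarith
    have hAsplit : (μ A).toReal = (μ (A \ A₂)).toReal + (μ A₂).toReal := by
      rw [← ENNReal.toReal_add (measure_ne_top μ _) (measure_ne_top μ _)]
      congr 1
      rw [← measure_union disjoint_sdiff_self_left hA2m, Set.diff_union_of_subset hA2sub]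
    rw [hsplitA, hAsplit]
    have hb2 : ∫ ω in A₂, f ω ∂μ ≤ E * (μ A₂).toReal := by
      rw [hA2int, hA2meas']
      exact hA2b
    have hb1 : ∫ ω in A \ A₂, f ω ∂μ ≤ E * (μ (A \ A₂)).toReal := by
      calc ∫ ω in A \ A₂, f ω ∂μ ≤ Real.exp (c * (H:ℝ)) * (μ (A \ A₂)).toReal := hA1b
        _ ≤ E * (μ (A \ A₂)).toReal :=
          mul_le_mul_of_nonneg_right hEge ENNReal.toReal_nonneg
    linarith [hb1, hb2, mul_add E ((μ (A \ A₂)).toReal) ((μ A₂).toReal)]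
  -- conclusion
  show ∫ ω, f ω ∂(μ[|A]) ≤ E
  rw [ProbabilityTheory.cond, integral_smul_measure, ENNReal.toReal_inv, smul_eq_mul]
  have hr : 0 < (μ A).toReal := ENNReal.toReal_pos hApos hAfin
  have hIA : ∫ ω, f ω ∂(μ.restrict A) = ∫ ω in A, f ω ∂μ := rfl
  rw [hIA]
  have hfinal : (μ A).toReal⁻¹ * (E * (μ A).toReal) = E := by
    field_simp
  calc (μ A).toReal⁻¹ * ∫ ω in A, f ω ∂μ
      ≤ (μ A).toReal⁻¹ * (E * (μ A).toReal) :=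
        mul_le_mul_of_nonneg_left hmain (by positivity)
    _ = E := hfinal
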